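/- Let x : [0,T] → ℝ^d be a C^1 path. Then for any n ≥ 0 and any 0 ≤ s ≤ u ≤ t ≤ T, Chen's identity holds: X_n(s,t) = Σ_{i=0}^n X_i(s,u) ⊗ X_{n−i}(u,t), where X_n(s,t) denotes the n-th iterated integral of x over [s,t]. -/

import Mathlib

open MeasureTheory Set

noncomputable section

/-- The open simplex { s < u₁ < ... < uₙ < t }. -/
def simplex (n : ℕ) (s t : ℝ) : Set (Fin n → ℝ) :=
  {u | (∀ i, u i ∈ Set.Ioo s t) ∧ ∀ i j : Fin n, i < j → u i < u j}

/-- The n-th iterated integral (signature level) of the path x over [s,t],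
as a tensor in (ℝ^d)^⊗n, modelled as a function (Fin n → Fin d) → ℝ. -/
def iterInt (d : ℕ) (x : ℝ → Fin d → ℝ) (n : ℕ) (s t : ℝ) :
    (Fin n → Fin d) → ℝ :=
  fun idx => ∫ u in simplex n s t, ∏ i, deriv x (u i) (idx i)

/-- The tensor-power inner product. -/
def tInner {ι : Type*} [Fintype ι] (a b : ι → ℝ) : ℝ := ∑ i, a i * b i

/-- The induced (Hilbert–Schmidt / Euclidean) norm. -/
def tNorm {ι : Type*} [Fintype ι] (a : ι → ℝ) : ℝ := Real.sqrt (tInner a a)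

/-- The signature kernel of paths x and y. -/
def sigKernel (d : ℕ) (x y : ℝ → Fin d → ℝ) (s t : ℝ) : ℝ :=
  ∑' n : ℕ, tInner (iterInt d x n 0 s) (iterInt d y n 0 t)

/-! ### Auxiliary material for Chen's identity -/

lemma measurableSet_simplex (n : ℕ) (s t : ℝ) : MeasurableSet (simplex n s t) := by
  have h1 : simplex n s t = (⋂ i, (fun u : Fin n → ℝ => u i) ⁻¹' Set.Ioo s t) ∩
      ⋂ i, ⋂ j, {u : Fin n → ℝ | i < j → u i < u j} := by
    ext u
    simp only [simplex, Set.mem_setOf_eq, Set.mem_inter_iff, Set.mem_iInter, Set.mem_preimage]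
  rw [h1]
  refine MeasurableSet.inter (MeasurableSet.iInter fun i =>
    (measurable_pi_apply i) measurableSet_Ioo)
    (MeasurableSet.iInter fun i => MeasurableSet.iInter fun j => ?_)
  by_cases h : i < j
  · have : {u : Fin n → ℝ | i < j → u i < u j} = {u | u i < u j} := by
      ext u; simp [h]
    rw [this]
    exact measurableSet_lt (measurable_pi_apply i) (measurable_pi_apply j)
  · have : {u : Fin n → ℝ | i < j → u i < u j} = Set.univ := by
      ext u; simp [h]
    rw [this]; exact MeasurableSet.univ

/-- The part of the simplex where the first `a` coordinates are below `m`
and the rest are above `m`. -/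
def Bset (n a : ℕ) (s m t : ℝ) : Set (Fin n → ℝ) :=
  simplex n s t ∩ {u | ∀ i : Fin n, ((i : ℕ) < a → u i < m) ∧ (a ≤ (i : ℕ) → m < u i)}

lemma measurableSet_Bset (n a : ℕ) (s m t : ℝ) : MeasurableSet (Bset n a s m t) := by
  refine (measurableSet_simplex n s t).inter ?_
  have h1 : {u : Fin n → ℝ | ∀ i : Fin n, ((i : ℕ) < a → u i < m) ∧ (a ≤ (i : ℕ) → m < u i)}
      = ⋂ i : Fin n, ({u : Fin n → ℝ | (i : ℕ) < a → u i < m} ∩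
          {u | a ≤ (i : ℕ) → m < u i}) := by
    ext u
    constructor
    · intro h
      simp only [Set.mem_iInter, Set.mem_inter_iff]
      exact fun i => ⟨fun hh => (h i).1 hh, fun hh => (h i).2 hh⟩
    · intro h i
      have := Set.mem_iInter.1 h i
      exact ⟨this.1, this.2⟩
  rw [h1]
  refine MeasurableSet.iInter fun i => MeasurableSet.inter ?_ ?_
  · by_cases h : (i : ℕ) < a
    · have : {u : Fin n → ℝ | (i : ℕ) < a → u i < m} = {u | u i < m} := by ext u; simp [h]
      rw [this]; exact measurableSet_lt (measurable_pi_apply i) measurable_const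
    · have : {u : Fin n → ℝ | (i : ℕ) < a → u i < m} = Set.univ := by ext u; simp [h]
      rw [this]; exact MeasurableSet.univ
  · by_cases h : a ≤ (i : ℕ)
    · have : {u : Fin n → ℝ | a ≤ (i : ℕ) → m < u i} = {u | m < u i} := by ext u; simp [h]
      rw [this]; exact measurableSet_lt measurable_const (measurable_pi_apply i)
    · have : {u : Fin n → ℝ | a ≤ (i : ℕ) → m < u i} = Set.univ := by ext u; simp [h]
      rw [this]; exact MeasurableSet.univ

lemma integral_Bset {n : ℕ} (a b : ℕ) (hab : a + b = n) (s m t : ℝ)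
    (h1 : s ≤ m) (h2 : m ≤ t) (F : Fin n → ℝ → ℝ) :
    ∫ u in Bset n a s m t, ∏ i, F i (u i)
      = (∫ v in simplex a s m, ∏ p : Fin a, F (Fin.castLE (by omega) p) (v p))
        * ∫ w in simplex b m t, ∏ q : Fin b, F ⟨a + q.1, by omega⟩ (w q) := by
  classical
  set E : Fin a ⊕ Fin b ≃ Fin n := finSumFinEquiv.trans (finCongr hab) with hE
  set Φ : ((Fin a → ℝ) × (Fin b → ℝ)) ≃ᵐ (Fin n → ℝ) :=
    (MeasurableEquiv.sumPiEquivProdPi (fun _ : Fin a ⊕ Fin b => ℝ)).symm.trans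
      (MeasurableEquiv.piCongrLeft (fun _ => ℝ) E) with hΦdef
  have hmp : MeasurePreserving Φ volume volume :=
    (volume_measurePreserving_piCongrLeft (fun _ : Fin n => ℝ) E).comp
      (volume_measurePreserving_sumPiEquivProdPi_symm (fun _ : Fin a ⊕ Fin b => ℝ))
  have hΦ : ∀ (v : Fin a → ℝ) (w : Fin b → ℝ) (c : Fin a ⊕ Fin b),
      Φ (v, w) (E c) = Sum.elim v w c := by
    intro v w c
    show (Equiv.piCongrLeft (fun _ => ℝ) E)
        ((Equiv.sumPiEquivProdPi (fun _ : Fin a ⊕ Fin b => ℝ)).symm (v, w)) (E c)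
      = Sum.elim v w c
    rw [Equiv.piCongrLeft_apply_apply]
    cases c <;> rfl
  have hEl : ∀ p : Fin a, (E (Sum.inl p) : ℕ) = (p : ℕ) := by
    intro p; simp [hE]
  have hEr : ∀ q : Fin b, (E (Sum.inr q) : ℕ) = a + (q : ℕ) := by
    intro q; simp [hE]
  have hElc : ∀ p : Fin a, E (Sum.inl p) = Fin.castLE (by omega) p :=
    fun p => Fin.ext (hEl p)
  have hErc : ∀ q : Fin b, E (Sum.inr q) = ⟨a + q.1, by omega⟩ :=
    fun q => Fin.ext (hEr q)
  have himg : Bset n a s m t = Φ '' (simplex a s m ×ˢ simplex b m t) := by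
    ext u
    constructor
    · rintro ⟨⟨hIoo, hmono⟩, hcond⟩
      refine ⟨(fun p => u (E (Sum.inl p)), fun q => u (E (Sum.inr q))), ⟨?_, ?_⟩, ?_⟩
      · constructor
        · intro p
          exact ⟨(hIoo _).1, (hcond (E (Sum.inl p))).1 (by rw [hEl]; exact p.2)⟩
        · intro p p' hpp'
          exact hmono _ _ (by rw [Fin.lt_def, hEl, hEl]; exact hpp')
      · constructor
        · intro q
          exact ⟨(hcond (E (Sum.inr q))).2 (by rw [hEr]; omega), (hIoo _).2⟩
        · intro q q' hqq'
          exact hmono _ _ (by rw [Fin.lt_def, hEr, hEr]; omega)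
      · funext i
        obtain ⟨c, rfl⟩ := E.surjective i
        rw [hΦ]; cases c <;> rfl
    · rintro ⟨⟨v, w⟩, ⟨hv, hw⟩, rfl⟩
      have hval : ∀ c : Fin a ⊕ Fin b, Φ (v, w) (E c) ∈ Set.Ioo s t ∧
          (((E c : ℕ) < a → Φ (v, w) (E c) < m) ∧ (a ≤ (E c : ℕ) → m < Φ (v, w) (E c))) := by
        rintro (p | q)
        · rw [hΦ]
          have h3 := hv.1 p
          exact ⟨⟨h3.1, lt_of_lt_of_le h3.2 h2⟩, ⟨fun _ => h3.2, fun hc => by rw [hEl] at hc; exact absurd p.2 (by omega)⟩⟩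
        · rw [hΦ]
          have h3 := hw.1 q
          exact ⟨⟨lt_of_le_of_lt h1 h3.1, h3.2⟩, ⟨fun hc => by rw [hEr] at hc; omega, fun _ => h3.1⟩⟩
      refine ⟨⟨fun i => ?_, fun i j hij => ?_⟩, fun i => ?_⟩
      · obtain ⟨c, rfl⟩ := E.surjective i; exact (hval c).1
      · obtain ⟨c, rfl⟩ := E.surjective i
        obtain ⟨c', rfl⟩ := E.surjective j
        rw [Fin.lt_def] at hij
        rcases c with p | q <;> rcases c' with p' | q'
        · rw [hΦ, hΦ]
          exact hv.2 p p' (by rw [hEl, hEl] at hij; exact hij)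
        · rw [hΦ, hΦ]
          exact lt_trans (hv.1 p).2 (hw.1 q').1
        · rw [hEr, hEl] at hij
          exact absurd p'.2 (by omega)
        · rw [hΦ, hΦ]
          exact hw.2 q q' (by rw [hEr, hEr] at hij; omega)
      · obtain ⟨c, rfl⟩ := E.surjective i; exact (hval c).2
  rw [himg, hmp.setIntegral_image_emb Φ.measurableEmbedding]
  have hsplit : ∀ z : (Fin a → ℝ) × (Fin b → ℝ),
      (∏ i, F i (Φ z i))
        = (∏ p : Fin a, F (Fin.castLE (by omega : a ≤ n) p) (z.1 p))
          * ∏ q : Fin b, F ⟨a + q.1, by omega⟩ (z.2 q) := by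
    rintro ⟨v, w⟩
    rw [← Equiv.prod_comp E (fun i => F i (Φ (v, w) i)), Fintype.prod_sum_type]
    congr 1
    · refine Finset.prod_congr rfl fun p _ => ?_
      rw [hΦ, hElc]; rfl
    · refine Finset.prod_congr rfl fun q _ => ?_
      rw [hΦ, hErc]; rfl
  calc ∫ z in simplex a s m ×ˢ simplex b m t, ∏ i, F i (Φ z i)
      = ∫ z in simplex a s m ×ˢ simplex b m t,
          (∏ p : Fin a, F (Fin.castLE (by omega : a ≤ n) p) (z.1 p))
            * ∏ q : Fin b, F ⟨a + q.1, by omega⟩ (z.2 q) := by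
        exact setIntegral_congr_fun
          ((measurableSet_simplex a s m).prod (measurableSet_simplex b m t))
          (fun z _ => hsplit z)
    _ = _ := by
        rw [show (volume : Measure ((Fin a → ℝ) × (Fin b → ℝ))) = volume.prod volume from rfl]
        exact setIntegral_prod_mul
          (fun v : Fin a → ℝ => ∏ p : Fin a, F (Fin.castLE (by omega : a ≤ n) p) (v p))
          (fun w : Fin b → ℝ => ∏ q : Fin b, F ⟨a + q.1, by omega⟩ (w q)) _ _

theorem chen (n : ℕ) (s m t : ℝ) (h1 : s ≤ m) (h2 : m ≤ t)
    (F : Fin n → ℝ → ℝ) (hF : ∀ i, Continuous (F i)) :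
    ∫ u in simplex n s t, ∏ i, F i (u i)
      = ∑ k : Fin (n + 1),
          (∫ v in simplex k s m,
              ∏ p : Fin k, F (Fin.castLE (Nat.le_of_lt_succ k.isLt) p) (v p))
            * ∫ w in simplex (n - k) m t,
              ∏ q : Fin (n - (k : ℕ)),
                F ⟨(k : ℕ) + q.val, by have := k.isLt; have := q.isLt; omega⟩ (w q) := by
  classical
  have hFcont : Continuous fun u : Fin n → ℝ => ∏ i, F i (u i) :=
    continuous_finset_prod _ fun i _ => (hF i).comp (continuous_apply i)
  have hint : IntegrableOn (fun u : Fin n → ℝ => ∏ i, F i (u i))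
      (Set.univ.pi fun _ => Set.Icc s t) :=
    hFcont.continuousOn.integrableOn_compact (isCompact_univ_pi fun _ => isCompact_Icc)
  have hsimsub : simplex n s t ⊆ Set.univ.pi fun _ => Set.Icc s t := by
    intro u hu
    rw [Set.mem_univ_pi]
    exact fun i => Set.Ioo_subset_Icc_self (hu.1 i)
  have hBsub : ∀ k : ℕ, Bset n k s m t ⊆ Set.univ.pi fun _ => Set.Icc s t :=
    fun k => Set.Subset.trans Set.inter_subset_left hsimsub
  -- a.e. equality with the union of the Bsets
  have hae : simplex n s t =ᵐ[volume] ⋃ k : Fin (n + 1), Bset n (k : ℕ) s m t := by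
    rw [ae_eq_set]
    constructor
    · apply measure_mono_null
        (?_ : _ ⊆ ⋃ i : Fin n, Set.univ.pi fun j => if j = i then ({m} : Set ℝ) else Set.Ioo s t)
      · exact measure_iUnion_null fun i => by
          rw [volume_pi_pi]
          exact Finset.prod_eq_zero (Finset.mem_univ i) (by simp)
      · rintro u ⟨husim, hunion⟩
        by_cases hm : ∃ i, u i = m
        · obtain ⟨i, hi⟩ := hm
          refine Set.mem_iUnion.2 ⟨i, ?_⟩
          rw [Set.mem_univ_pi]
          intro j
          by_cases hji : j = i
          · subst hji; simp [hi]
          · simp only [if_neg hji]; exact husim.1 j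
        · push_neg at hm
          exfalso
          apply hunion
          set Fs : Finset (Fin n) := Finset.univ.filter (fun i => u i < m) with hFs
          have hcard : Fs.card ≤ n := by
            simpa using Finset.card_filter_le Finset.univ (fun i => u i < m)
          have hA : ∀ i : Fin n, u i < m → (i : ℕ) < Fs.card := by
            intro i hi
            have hsub : Finset.Iic i ⊆ Fs := by
              intro j hj
              rw [Finset.mem_Iic] at hj
              rw [hFs, Finset.mem_filter]
              refine ⟨Finset.mem_univ _, ?_⟩
              rcases eq_or_lt_of_le hj with h | h
              · rw [h]; exact hi
              · exact lt_trans (husim.2 j i h) hi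
            have := Finset.card_le_card hsub
            rw [Fin.card_Iic] at this
            omega
          have hB : ∀ i : Fin n, ¬ u i < m → Fs.card ≤ (i : ℕ) := by
            intro i hi
            have hsub : Fs ⊆ Finset.Iio i := by
              intro j hj
              rw [hFs, Finset.mem_filter] at hj
              rw [Finset.mem_Iio]
              by_contra hji
              push_neg at hji
              rcases eq_or_lt_of_le hji with h | h
              · exact hi (h ▸ hj.2)
              · exact hi (lt_trans (husim.2 i j h) hj.2)
            have := Finset.card_le_card hsub
            rw [Fin.card_Iio] at this
            exact this
          refine Set.mem_iUnion.2 ⟨⟨Fs.card, by omega⟩, husim, fun i => ⟨?_, ?_⟩⟩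
          · intro hik
            have hik' : (i : ℕ) < Fs.card := by simpa using hik
            by_contra hge
            exact absurd (hB i hge) (by omega)
          · intro hki
            have hki' : Fs.card ≤ (i : ℕ) := by simpa using hki
            have hge : ¬ u i < m := fun hlt => by have := hA i hlt; omega
            push_neg at hge
            exact lt_of_le_of_ne hge (Ne.symm (hm i))
    · have : (⋃ k : Fin (n + 1), Bset n (k : ℕ) s m t) \ simplex n s t = ∅ := by
        rw [Set.diff_eq_empty]
        exact Set.iUnion_subset fun k => Set.inter_subset_left
      rw [this]
      exact measure_empty
  rw [setIntegral_congr_set hae]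
  have hdis : ∀ k k' : ℕ, k < k' → k' ≤ n →
      Disjoint (Bset n k s m t) (Bset n k' s m t) := by
    intro k k' hkk' hk'n
    rw [Set.disjoint_left]
    rintro u ⟨_, hc⟩ ⟨_, hc'⟩
    have hiv : k < n := by omega
    have hgt := (hc ⟨k, hiv⟩).2 (le_refl k)
    have hlt := (hc' ⟨k, hiv⟩).1 (by simpa using hkk')
    linarith
  have hpd : Pairwise (Function.onFun Disjoint fun k : Fin (n + 1) => Bset n (k : ℕ) s m t) := by
    intro k k' hne
    rcases lt_or_gt_of_ne (fun h => hne (Fin.ext (by exact_mod_cast congrArg id h))) with h | h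
    · exact hdis _ _ h (by omega)
    · exact (hdis _ _ h (by omega)).symm
  rw [integral_iUnion_fintype (fun k => measurableSet_Bset n _ s m t) hpd
    (fun k => hint.mono_set (hBsub _))]
  refine Finset.sum_congr rfl fun k _ => ?_
  exact integral_Bset (k : ℕ) (n - (k : ℕ)) (by omega) s m t h1 h2 F

/-- Chen's identity: X_n(s,t) = Σ_{i=0}^n X_i(s,m) ⊗ X_{n−i}(m,t), stated
componentwise on the tensor (Fin n → Fin d) → ℝ. -/
theorem stmt12 (d : ℕ) (x : ℝ → Fin d → ℝ) (hx : ContDiff ℝ 1 x)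
    (s m t : ℝ) (h1 : s ≤ m) (h2 : m ≤ t) (n : ℕ) (idx : Fin n → Fin d) :
    iterInt d x n s t idx
      = ∑ i : Fin (n + 1),
          iterInt d x i s m
              (fun p : Fin i => idx (Fin.castLE (Nat.le_of_lt_succ i.isLt) p))
            * iterInt d x (n - i) m t
              (fun q : Fin (n - (i : ℕ)) =>
                idx ⟨(i : ℕ) + q.val, by have := q.isLt; have := i.isLt; omega⟩) := by
  have hF : ∀ i : Fin n, Continuous (fun r => deriv x r (idx i)) :=
    fun i => (continuous_apply (idx i)).comp (hx.continuous_deriv le_rfl)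
  exact chen n s m t h1 h2 (fun i r => deriv x r (idx i)) hF
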